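/- arXiv:2006.01483 — 5 statements merged into one kernel-verified Lean document; each statement's English description precedes it below -/
import Mathlib

section
/- Let R : A → A be a Rota-Baxter operator of weight 0 on an associative algebra A, i.e., R(a)R(b) = R(R(a)b + aR(b)) for all a, b. Then the operations a ≺ b := a R(b) and a ≻ b := R(a) b make A into a dendriform algebra. -/
/-- A Rota-Baxter operator of weight `0` on an associative algebra induces a dendriform
algebra structure `a ≺ b = a R(b)`, `a ≻ b = R(a) b`. -/
theorem rotaBaxter_weight_zero_dendriform {K A : Type*} [Field K] [Ring A] [Algebra K A]
    (R : A →ₗ[K] A)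
    (hR : ∀ a b : A, R a * R b = R (R a * b + a * R b)) :
    (∀ a b c : A, (a * R b) * R c = a * R (b * R c + R b * c)) ∧
    (∀ a b c : A, (R a * b) * R c = R a * (b * R c)) ∧
    (∀ a b c : A, R (a * R b + R a * b) * c = R a * (R b * c)) := by
  refine ⟨fun a b c => ?_, fun a b c => mul_assoc _ _ _, fun a b c => ?_⟩
  · rw [mul_assoc, hR b c, add_comm]
  · rw [add_comm, ← hR, mul_assoc]
end

section
/- Let R be a Rota-Baxter operator of weight λ on an associative algebra A. Then the operations a ≺ b := aR(b), a ≻ b := R(a)b, and a · b := λab make A into a tridendriform algebra. -/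
/-- A Rota-Baxter operator of weight `λ` on an associative algebra `A` induces a
tridendriform algebra structure `a ≺ b = aR(b)`, `a ≻ b = R(a)b`, `a · b = λab`. -/
theorem rotaBaxter_tridendriform {K A : Type*} [Field K] [Ring A] [Algebra K A]
    (l : K) (R : A →ₗ[K] A)
    (hR : ∀ a b : A, R a * R b = R (R a * b + a * R b + l • (a * b))) :
    (∀ a b c : A, (a * R b) * R c = a * R (b * R c + R b * c + l • (b * c))) ∧
    (∀ a b c : A, (R a * b) * R c = R a * (b * R c)) ∧
    (∀ a b c : A, R (a * R b + R a * b + l • (a * b)) * c = R a * (R b * c)) ∧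
    (∀ a b c : A, l • ((R a * b) * c) = R a * (l • (b * c))) ∧
    (∀ a b c : A, l • ((a * R b) * c) = l • (a * (R b * c))) ∧
    (∀ a b c : A, (l • (a * b)) * R c = l • (a * (b * R c))) ∧
    (∀ a b c : A, l • ((l • (a * b)) * c) = l • (a * (l • (b * c)))) := by
  refine ⟨?_, ?_, ?_, ?_, ?_, ?_, ?_⟩ <;> intro a b c
  · rw [mul_assoc, hR]; congr 1; apply congrArg; abel
  · rw [mul_assoc]
  · have : a * R b + R a * b + l • (a * b) = R a * b + a * R b + l • (a * b) := by abel
    rw [this, ← hR, mul_assoc]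
  · rw [mul_smul_comm, mul_assoc]
  · rw [mul_assoc]
  · rw [smul_mul_assoc, mul_assoc]
  · rw [smul_mul_assoc, mul_smul_comm, mul_assoc]
end

section
/- If (D, ≺, ≻, ·) is a tridendriform algebra, then (D, ≺', ≻) with a ≺' b := a ≺ b + a · b is a dendriform algebra. -/
/-- If `(D, ≺, ≻, ·)` is a tridendriform algebra, then `(D, ≺ + ·, ≻)` is a
dendriform algebra. -/
theorem tridendriform_to_dendriform {K D : Type*} [Field K] [AddCommGroup D] [Module K D]
    (p s d : D →ₗ[K] D →ₗ[K] D)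
    (h1 : ∀ a b c : D, p (p a b) c = p a (p b c + s b c + d b c))
    (h2 : ∀ a b c : D, p (s a b) c = s a (p b c))
    (h3 : ∀ a b c : D, s (p a b + s a b + d a b) c = s a (s b c))
    (h4 : ∀ a b c : D, d (s a b) c = s a (d b c))
    (h5 : ∀ a b c : D, d (p a b) c = d a (s b c))
    (h6 : ∀ a b c : D, p (d a b) c = d a (p b c))
    (h7 : ∀ a b c : D, d (d a b) c = d a (d b c)) :
    (∀ a b c : D,
      (p (p a b + d a b) c + d (p a b + d a b) c) =
        (p a ((p b c + d b c) + s b c) + d a ((p b c + d b c) + s b c))) ∧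
    (∀ a b c : D, (p (s a b) c + d (s a b) c) = s a (p b c + d b c)) ∧
    (∀ a b c : D, s ((p a b + d a b) + s a b) c = s a (s b c)) := by
  refine ⟨fun a b c => ?_, fun a b c => ?_, fun a b c => ?_⟩
  · simp only [map_add, LinearMap.add_apply, h1, h5, h6, h7]
    abel
  · simp only [map_add, LinearMap.add_apply, h2, h4]
  · rw [← h3 a b c]
    congr 1
    abel
end

section
/- Let A be an involutive associative algebra with involution * and M an involutive A-bimodule. For n ≥ 1 define iC^n(A, M) = { f : A^⊗n → M | f(a₁,…,aₙ)* = (−1)^{(n−1)(n−2)/2} f(aₙ*,…,a₁*) }. Then the Hochschild coboundary δ maps iC^n(A, M) into iC^{n+1}(A, M), i.e., the involutive cochains form a subcomplex of the Hochschild complex. -/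
private lemma negOnePow_parity (p q : ℕ) (h : p % 2 = q % 2) : (-1 : ℤ) ^ p = (-1) ^ q := by
  rw [← Nat.div_add_mod p 2, ← Nat.div_add_mod q 2, h, pow_add, pow_add, pow_mul, pow_mul]
  norm_num

private lemma triangle_step (n : ℕ) (hn : 1 ≤ n) :
    n * (n - 1) / 2 = (n - 1) * (n - 2) / 2 + (n - 1) := by
  obtain ⟨m, rfl⟩ := Nat.exists_eq_add_of_le hn
  rcases m with _ | k
  · simp
  · have h2 : (1 + (k + 1)) * (1 + (k + 1) - 1) = (k + 1) * k + 2 * (k + 1) := by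
      rw [show 1 + (k + 1) - 1 = k + 1 from by omega, show 1 + (k + 1) = k + 2 from by omega]
      ring
    have h3 : (1 + (k + 1) - 1) * (1 + (k + 1) - 2) = (k + 1) * k := by
      rw [show 1 + (k + 1) - 1 = k + 1 from by omega, show 1 + (k + 1) - 2 = k from by omega]
    have hev : (k + 1) * k % 2 = 0 := by
      rcases Nat.even_or_odd k with ⟨t, ht⟩ | ⟨t, ht⟩ <;> subst ht <;> ring_nf <;> omega
    rw [h2, h3]
    omega


/-- The Hochschild coboundary of a cochain `f : A^⊗n → M`, where the left and right
`A`-actions on `M` are given by `al` and `ar`. -/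
def hochschildDelta {K A M : Type*} [Field K] [Ring A] [Algebra K A]
    [AddCommGroup M] [Module K M]
    (al : A →ₗ[K] M →ₗ[K] M) (ar : M →ₗ[K] A →ₗ[K] M) (n : ℕ)
    (f : (Fin n → A) → M) : (Fin (n + 1) → A) → M :=
  fun a =>
    al (a 0) (f (Fin.tail a))
      + (Finset.univ.sum fun i : Fin n =>
          ((-1 : ℤ) ^ (i.1 + 1)) •
            f (fun j : Fin n =>
              if j.1 < i.1 then a j.castSucc
              else if j.1 = i.1 then a j.castSucc * a j.succ
              else a j.succ))
      + ((-1 : ℤ) ^ (n + 1)) • ar (f (Fin.init a)) (a (Fin.last n))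

/-- For an involutive associative algebra `A` and an involutive `A`-bimodule `M`, the
involutive cochains `iC^n(A,M) = { f | f(a₁,…,aₙ)* = (−1)^{(n−1)(n−2)/2} f(aₙ*,…,a₁*) }`
form a subcomplex of the Hochschild complex: the coboundary of an involutive `n`-cochain
is an involutive `(n+1)`-cochain. -/
theorem hochschildDelta_involutive
    {K A M : Type*} [Field K] [Ring A] [Algebra K A]
    [AddCommGroup M] [Module K M]
    (al : A →ₗ[K] M →ₗ[K] M) (ar : M →ₗ[K] A →ₗ[K] M)
    (hassoc : ∀ (a b : A) (m : M), al (a * b) m = al a (al b m))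
    (hassoc' : ∀ (m : M) (a b : A), ar (ar m a) b = ar m (a * b))
    (hmid : ∀ (a : A) (m : M) (b : A), ar (al a m) b = al a (ar m b))
    (invA : A →ₗ[K] A) (invM : M →ₗ[K] M)
    (hinvA : ∀ a : A, invA (invA a) = a)
    (hinvM : ∀ m : M, invM (invM m) = m)
    (hantiA : ∀ a b : A, invA (a * b) = invA b * invA a)
    (hal : ∀ (a : A) (m : M), invM (al a m) = ar (invM m) (invA a))
    (har : ∀ (m : M) (a : A), invM (ar m a) = al (invA a) (invM m))
    (n : ℕ) (hn : 1 ≤ n)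
    (f : (Fin n → A) → M)
    (hf : ∀ a : Fin n → A,
      invM (f a) = ((-1 : ℤ) ^ ((n - 1) * (n - 2) / 2)) •
        f (fun i => invA (a (Fin.rev i)))) :
    ∀ a : Fin (n + 1) → A,
      invM (hochschildDelta al ar n f a) =
        ((-1 : ℤ) ^ (n * (n - 1) / 2)) •
          hochschildDelta al ar n f (fun i => invA (a (Fin.rev i))) := by
  intro a
  set ε : ℤ := (-1) ^ ((n - 1) * (n - 2) / 2) with hε
  set c : ℤ := (-1) ^ (n * (n - 1) / 2) with hc
  set b : Fin (n + 1) → A := fun i => invA (a (Fin.rev i)) with hb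
  have ht := triangle_step n hn
  -- coefficient identities
  have e1 : ε = c * (-1 : ℤ) ^ (n + 1) := by
    rw [hε, hc, ← pow_add]
    exact negOnePow_parity _ _ (by omega)
  have e3 : (-1 : ℤ) ^ (n + 1) * ε = c := by
    rw [hε, hc, ← pow_add]
    exact negOnePow_parity _ _ (by omega)
  have esum : ∀ i : Fin n,
      (-1 : ℤ) ^ ((Fin.rev i).1 + 1) * ε = c * (-1 : ℤ) ^ (i.1 + 1) := by
    intro i
    have hi := i.2
    rw [hε, hc, ← pow_add, ← pow_add, Fin.val_rev]
    exact negOnePow_parity _ _ (by omega)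
  -- smul helper lemmas
  have arsmul : ∀ (z : ℤ) (m : M) (x : A), ar (z • m) x = z • ar m x := by
    intro z m x
    rw [map_zsmul]
    rfl
  have alsmul : ∀ (x : A) (z : ℤ) (m : M), al x (z • m) = z • al x m := by
    intro x z m
    exact map_zsmul (al x) z m
  -- term 1
  have ht1 : (fun i : Fin n => invA (Fin.tail a (Fin.rev i))) = Fin.init b := by
    funext i
    show invA (a (Fin.rev i).succ) = invA (a (Fin.rev i.castSucc))
    rw [Fin.rev_castSucc]
  have ht2 : invA (a 0) = b (Fin.last n) := by
    show invA (a 0) = invA (a (Fin.rev (Fin.last n)))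
    rw [Fin.rev_last]
  have h1 : invM (al (a 0) (f (Fin.tail a))) = ε • ar (f (Fin.init b)) (b (Fin.last n)) := by
    rw [hal, hf, arsmul, ht1, ht2]
  -- term 3
  have ht3 : (fun i : Fin n => invA (Fin.init a (Fin.rev i))) = Fin.tail b := by
    funext i
    show invA (a (Fin.rev i).castSucc) = invA (a (Fin.rev i.succ))
    rw [Fin.rev_succ]
  have ht4 : invA (a (Fin.last n)) = b 0 := by
    show invA (a (Fin.last n)) = invA (a (Fin.rev 0))
    rw [Fin.rev_zero]
  have h3 : invM (ar (f (Fin.init a)) (a (Fin.last n))) = ε • al (b 0) (f (Fin.tail b)) := by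
    rw [har, hf, alsmul, ht3, ht4]
  -- middle terms
  have key : ∀ i : Fin n,
      (fun j : Fin n => invA ((fun j : Fin n =>
          if j.1 < i.1 then a j.castSucc
          else if j.1 = i.1 then a j.castSucc * a j.succ
          else a j.succ) (Fin.rev j)))
      = (fun j : Fin n =>
          if j.1 < (Fin.rev i).1 then b j.castSucc
          else if j.1 = (Fin.rev i).1 then b j.castSucc * b j.succ
          else b j.succ) := by
    intro i
    funext j
    have hi := i.2
    have hj := j.2
    have hrj : (Fin.rev j).1 = n - (j.1 + 1) := Fin.val_rev j
    have hri : (Fin.rev i).1 = n - (i.1 + 1) := Fin.val_rev i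
    simp only
    rcases lt_trichotomy j.1 (Fin.rev i).1 with h | h | h
    · rw [if_neg (by omega : ¬ (Fin.rev j).1 < i.1),
        if_neg (by omega : ¬ (Fin.rev j).1 = i.1), if_pos h]
      show invA (a (Fin.rev j).succ) = invA (a (Fin.rev j.castSucc))
      rw [Fin.rev_castSucc]
    · rw [if_neg (by omega : ¬ (Fin.rev j).1 < i.1),
        if_pos (by omega : (Fin.rev j).1 = i.1),
        if_neg (by omega : ¬ j.1 < (Fin.rev i).1), if_pos h]
      show invA (a (Fin.rev j).castSucc * a (Fin.rev j).succ) = b j.castSucc * b j.succ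
      rw [hantiA]
      show invA (a (Fin.rev j).succ) * invA (a (Fin.rev j).castSucc)
        = invA (a (Fin.rev j.castSucc)) * invA (a (Fin.rev j.succ))
      rw [Fin.rev_castSucc, Fin.rev_succ]
    · rw [if_pos (by omega : (Fin.rev j).1 < i.1),
        if_neg (by omega : ¬ j.1 < (Fin.rev i).1),
        if_neg (by omega : ¬ j.1 = (Fin.rev i).1)]
      show invA (a (Fin.rev j).castSucc) = invA (a (Fin.rev j.succ))
      rw [Fin.rev_succ]
  -- now compute
  show invM (al (a 0) (f (Fin.tail a))
      + (Finset.univ.sum fun i : Fin n =>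
          ((-1 : ℤ) ^ (i.1 + 1)) •
            f (fun j : Fin n =>
              if j.1 < i.1 then a j.castSucc
              else if j.1 = i.1 then a j.castSucc * a j.succ
              else a j.succ))
      + ((-1 : ℤ) ^ (n + 1)) • ar (f (Fin.init a)) (a (Fin.last n)))
    = c • (al (b 0) (f (Fin.tail b))
      + (Finset.univ.sum fun i : Fin n =>
          ((-1 : ℤ) ^ (i.1 + 1)) •
            f (fun j : Fin n =>
              if j.1 < i.1 then b j.castSucc
              else if j.1 = i.1 then b j.castSucc * b j.succ
              else b j.succ))
      + ((-1 : ℤ) ^ (n + 1)) • ar (f (Fin.init b)) (b (Fin.last n)))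
  rw [map_add, map_add, map_sum, map_zsmul, h1, h3]
  have hmidsum : (Finset.univ.sum fun i : Fin n =>
        invM (((-1 : ℤ) ^ (i.1 + 1)) •
          f (fun j : Fin n =>
            if j.1 < i.1 then a j.castSucc
            else if j.1 = i.1 then a j.castSucc * a j.succ
            else a j.succ)))
      = Finset.univ.sum fun i : Fin n =>
          (((-1 : ℤ) ^ ((Fin.rev i).1 + 1)) * ε) •
            f (fun j : Fin n =>
              if j.1 < i.1 then b j.castSucc
              else if j.1 = i.1 then b j.castSucc * b j.succ
              else b j.succ) := by
    have step : ∀ i : Fin n,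
        invM (((-1 : ℤ) ^ (i.1 + 1)) •
          f (fun j : Fin n =>
            if j.1 < i.1 then a j.castSucc
            else if j.1 = i.1 then a j.castSucc * a j.succ
            else a j.succ))
        = (((-1 : ℤ) ^ (i.1 + 1)) * ε) •
            f (fun j : Fin n =>
              if j.1 < (Fin.rev i).1 then b j.castSucc
              else if j.1 = (Fin.rev i).1 then b j.castSucc * b j.succ
              else b j.succ) := by
      intro i
      rw [map_zsmul, hf, key i, smul_smul]
    rw [Finset.sum_congr rfl (fun i _ => step i)]
    refine (Fintype.sum_equiv Fin.revPerm _ _ ?_).symm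
    intro i
    simp [Fin.rev_rev]
  rw [hmidsum]
  rw [smul_add, smul_add, Finset.smul_sum]
  have hsum2 : (Finset.univ.sum fun i : Fin n =>
        (((-1 : ℤ) ^ ((Fin.rev i).1 + 1)) * ε) •
          f (fun j : Fin n =>
            if j.1 < i.1 then b j.castSucc
            else if j.1 = i.1 then b j.castSucc * b j.succ
            else b j.succ))
      = Finset.univ.sum fun i : Fin n =>
          c • (((-1 : ℤ) ^ (i.1 + 1)) •
            f (fun j : Fin n =>
              if j.1 < i.1 then b j.castSucc
              else if j.1 = i.1 then b j.castSucc * b j.succ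
              else b j.succ)) := by
    refine Finset.sum_congr rfl fun i _ => ?_
    rw [smul_smul, esum i]
  rw [hsum2]
  have q1 : ε • ar (f (Fin.init b)) (b (Fin.last n))
      = c • (((-1 : ℤ) ^ (n + 1)) • ar (f (Fin.init b)) (b (Fin.last n))) := by
    rw [smul_smul, ← e1]
  have q3 : ((-1 : ℤ) ^ (n + 1)) • (ε • al (b 0) (f (Fin.tail b)))
      = c • al (b 0) (f (Fin.tail b)) := by
    rw [smul_smul, e3]
  rw [q1, q3]
  abel
end

section
/- Let D be a dendriform algebra, M an abelian dendriform algebra (trivial products) that is a representation of D, and (α, β) data with β : {1,2} × D × D → M and α = 0 (the split case). If β satisfies the 2-cocycle conditions for the dendriform cohomology, then B = M ⊕ D with operations (m,a) ≺ (n,b) = (m ≺ b + a ≺ n + β(1;a,b), a ≺ b) and (m,a) ≻ (n,b) = (m ≻ b + a ≻ n + β(2;a,b), a ≻ b) is a dendriform algebra. -/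
/-- Given a dendriform algebra `D`, a representation `M` (viewed as an abelian dendriform
algebra), and a dendriform 2-cocycle `β = (β¹, β²)` (split case `α = 0`), the space
`B = M ⊕ D` with operations
`(m,a) ≺ (n,b) = (m ≺ b + a ≺ n + β¹(a,b), a ≺ b)` and
`(m,a) ≻ (n,b) = (m ≻ b + a ≻ n + β²(a,b), a ≻ b)` is a dendriform algebra. -/
theorem dendriform_extension_by_cocycle
    {K D M : Type*} [Field K] [AddCommGroup D] [Module K D]
    [AddCommGroup M] [Module K M]
    (p s : D →ₗ[K] D →ₗ[K] D)
    (h1 : ∀ a b c : D, p (p a b) c = p a (p b c + s b c))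
    (h2 : ∀ a b c : D, p (s a b) c = s a (p b c))
    (h3 : ∀ a b c : D, s (p a b + s a b) c = s a (s b c))
    -- action maps of the representation M
    (pl sl : D →ₗ[K] M →ₗ[K] M) (pr sr : M →ₗ[K] D →ₗ[K] M)
    -- the nine representation identities
    (r1 : ∀ (m : M) (b c : D), pr (pr m b) c = pr m (p b c + s b c))
    (r2 : ∀ (a : D) (m : M) (c : D), pr (pl a m) c = pl a (pr m c + sr m c))
    (r3 : ∀ (a b : D) (m : M), pl (p a b) m = pl a (pl b m + sl b m))
    (r4 : ∀ (m : M) (b c : D), pr (sr m b) c = sr m (p b c))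
    (r5 : ∀ (a : D) (m : M) (c : D), pr (sl a m) c = sl a (pr m c))
    (r6 : ∀ (a b : D) (m : M), pl (s a b) m = sl a (pl b m))
    (r7 : ∀ (m : M) (b c : D), sr (pr m b + sr m b) c = sr m (s b c))
    (r8 : ∀ (a : D) (m : M) (c : D), sr (pl a m + sl a m) c = sl a (sr m c))
    (r9 : ∀ (a b : D) (m : M), sl (p a b + s a b) m = sl a (sl b m))
    -- the 2-cocycle β = (β¹, β²)
    (β1 β2 : D →ₗ[K] D →ₗ[K] M)
    (c1 : ∀ a b c : D,
      β1 (p a b) c + pr (β1 a b) c = pl a (β1 b c + β2 b c) + β1 a (p b c + s b c))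
    (c2 : ∀ a b c : D,
      β1 (s a b) c + pr (β2 a b) c = sl a (β1 b c) + β2 a (p b c))
    (c3 : ∀ a b c : D,
      β2 (p a b + s a b) c + sr (β1 a b + β2 a b) c = sl a (β2 b c) + β2 a (s b c)) :
    ∀ P S : M × D → M × D → M × D,
      (P = fun x y => (pr x.1 y.2 + pl x.2 y.1 + β1 x.2 y.2, p x.2 y.2)) →
      (S = fun x y => (sr x.1 y.2 + sl x.2 y.1 + β2 x.2 y.2, s x.2 y.2)) →
      (∀ x y z : M × D, P (P x y) z = P x (P y z + S y z)) ∧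
      (∀ x y z : M × D, P (S x y) z = S x (P y z)) ∧
      (∀ x y z : M × D, S (P x y + S x y) z = S x (S y z)) := by
  intro P S hP hS
  subst hP hS
  refine ⟨fun x y z => ?_, fun x y z => ?_, fun x y z => ?_⟩ <;>
    obtain ⟨m,a⟩ := x <;> obtain ⟨n,b⟩ := y <;> obtain ⟨q,c⟩ := z <;>
    refine Prod.ext ?_ ?_ <;>
    simp only [Prod.mk_add_mk, Prod.fst, Prod.snd, map_add, LinearMap.add_apply]
  · have e1 := r1 m b c; have e2 := r2 a n c; have e3 := r3 a b q
    have ec := c1 a b c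
    simp only [map_add, LinearMap.add_apply] at e1 e2 e3 ec
    have ec' := eq_sub_of_add_eq ec
    rw [e1, e2, e3, ec']; abel
  · rw [h1, map_add]
  · have e1 := r4 m b c; have e2 := r5 a n c; have e3 := r6 a b q
    have ec := c2 a b c
    have ec' := eq_sub_of_add_eq ec
    rw [e1, e2, e3, ec']; abel
  · rw [h2]
  · have e1 := r7 m b c; have e2 := r8 a n c; have e3 := r9 a b q
    have ec := c3 a b c
    simp only [map_add, LinearMap.add_apply] at e1 e2 e3 ec
    have e1' := eq_sub_of_add_eq e1
    have e2' := eq_sub_of_add_eq e2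
    have e3' := eq_sub_of_add_eq e3
    have ec' : (β2 ((p a) b)) c = (sl a) ((β2 b) c) + (β2 a) ((s b) c)
        - (β2 ((s a) b)) c - (sr ((β1 a) b)) c - (sr ((β2 a) b)) c := by
      rw [← ec]; abel
    rw [e1', e2', e3', ec']; abel
  · rw [← LinearMap.add_apply, ← map_add, h3]
end
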